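/- The subspace g₊ of formal Laurent series in p (coefficients smooth in x, z) containing only nonnegative powers of p, and the subspace g₋ containing only strictly negative powers of p, are both Lie subalgebras with respect to the contact bracket, i.e., {g₊, g₊}_C ⊆ g₊ and {g₋, g₋}_C ⊆ g₋. -/
import Mathlib


/-- Partial derivative in `x` of a coefficient function of `(x, z)`. -/
noncomputable def cdX (w : ℝ → ℝ → ℝ) : ℝ → ℝ → ℝ :=
  fun x z => deriv (fun q => w q z) x

/-- Partial derivative in `z` of a coefficient function of `(x, z)`. -/
noncomputable def cdZ (w : ℝ → ℝ → ℝ) : ℝ → ℝ → ℝ :=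
  fun x z => deriv (fun q => w x q) z

/-- Coefficient at `p^k` of the contact bracket `{f, g}_C` of the formal Laurent
series `f = Σᵢ u i · pⁱ` and `g = Σⱼ v j · pʲ` whose coefficients are functions
of `(x, z)`:
`{f,g}_C = f_p g_x − p f_p g_z + f g_z − (g_p f_x − p g_p f_z + g f_z)`. -/
noncomputable def cbCoeff (u v : ℤ → ℝ → ℝ → ℝ) (k : ℤ) : ℝ → ℝ → ℝ :=
  fun x z =>
    ∑ᶠ i : ℤ,
      ((i : ℝ) * u i x z * cdX (v (k + 1 - i)) x z
        - (i : ℝ) * u i x z * cdZ (v (k - i)) x z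
        + u i x z * cdZ (v (k - i)) x z
        - ((i : ℝ) * v i x z * cdX (u (k + 1 - i)) x z
            - (i : ℝ) * v i x z * cdZ (u (k - i)) x z
            + v i x z * cdZ (u (k - i)) x z))

lemma cdX_zero : cdX (0 : ℝ → ℝ → ℝ) = 0 := by
  funext x z; simp [cdX]

lemma cdZ_zero : cdZ (0 : ℝ → ℝ → ℝ) = 0 := by
  funext x z; simp [cdZ]

/-- The subspaces of formal Laurent series in `p` with only nonnegative powers,
resp. only strictly negative powers, are closed under the contact bracket. -/
theorem stmt10 :
    (∀ u v : ℤ → ℝ → ℝ → ℝ, {i | u i ≠ 0}.Finite → {i | v i ≠ 0}.Finite →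
      (∀ i, i < 0 → u i = 0) → (∀ i, i < 0 → v i = 0) →
      ∀ k, k < 0 → cbCoeff u v k = 0) ∧
    (∀ u v : ℤ → ℝ → ℝ → ℝ, {i | u i ≠ 0}.Finite → {i | v i ≠ 0}.Finite →
      (∀ i, 0 ≤ i → u i = 0) → (∀ i, 0 ≤ i → v i = 0) →
      ∀ k, 0 ≤ k → cbCoeff u v k = 0) := by
  constructor
  · intro u v _ _ hu hv k hk
    funext x z
    apply finsum_eq_zero_of_forall_eq_zero
    intro i
    rcases lt_or_ge i 0 with hi | hi
    · rw [hu i hi, hv i hi]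
      simp
    · have h1 : k - i < 0 := by omega
      rw [hu _ h1, hv _ h1, cdZ_zero]
      rcases lt_or_ge (k + 1 - i) 0 with h2 | h2
      · rw [hu _ h2, hv _ h2, cdX_zero]
        simp
      · have : i = 0 := by omega
        subst this
        simp
  · intro u v _ _ hu hv k hk
    funext x z
    apply finsum_eq_zero_of_forall_eq_zero
    intro i
    rcases le_or_gt 0 i with hi | hi
    · rw [hu i hi, hv i hi]
      simp
    · have h1 : 0 ≤ k - i := by omega
      have h2 : 0 ≤ k + 1 - i := by omega
      rw [hu _ h1, hv _ h1, hu _ h2, hv _ h2, cdZ_zero, cdX_zero]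
      simp
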